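/- Chain rule for KL divergence in a sequential decision process: if P and Q are the laws of a sequence Z^(t) = (Z(1),…,Z(t)) such that the conditional law of the action given the past is the same under P and Q (same policy), and the conditional law of the observation at step s given the past and the action differs only through the reward distribution of the chosen arm, then KL(P‖Q) = ∑_{s=1}^{t} E_P[ KL of reward distribution of the arm chosen at step s under P vs Q ]. In particular, for Bernoulli rewards where arm k has mean μ_k under P and mean β under Q (and all other arms are identical), KL(P‖Q) = kl(μ_k, β) · E_P[T_k(t)], where T_k(t) is the number of times arm k is chosen in the first t steps. -/

import Mathlib

open Real


open Finset

lemma snoc_lt {α : Type*} {n : ℕ} (z' : Fin n → α) (x : α) (i : Fin (n + 1))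
    (hi : i.val < n) : Fin.snoc (α := fun _ => α) z' x i = z' ⟨i.val, hi⟩ := by
  exact Fin.snoc_castSucc (α := fun _ => α) (p := z') (x := x) (i := ⟨i.val, hi⟩)

lemma tower {α : Type*} [Fintype α] :
    ∀ (n : ℕ) (κ : (s : Fin n) → (Fin s.val → α) → α → ℝ),
      (∀ s h, ∑ x, κ s h x = 1) →
      ∀ (s₀ : Fin n) (h : α → ℝ),
        (∀ hist : Fin s₀.val → α, ∑ x, κ s₀ hist x * h x = 0) →
        ∑ z : Fin n → α,
          (∏ s, κ s (fun j => z ⟨j.val, j.isLt.trans s.isLt⟩) (z s)) * h (z s₀) = 0 := by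
  intro n
  induction n with
  | zero => intro κ _ s₀; exact s₀.elim0
  | succ n ih =>
    intro κ hκ s₀ h hh
    rw [← Equiv.sum_comp (Fin.snocEquiv (fun _ : Fin (n + 1) => α))
      (fun z => (∏ s, κ s (fun j => z ⟨j.val, j.isLt.trans s.isLt⟩) (z s)) * h (z s₀))]
    rw [Fintype.sum_prod_type]
    simp only [Fin.snocEquiv_apply]
    have key : ∀ (x : α) (y : Fin n → α),
        (∏ s : Fin (n+1), κ s (fun j => Fin.snoc (α := fun _ => α) y x
            ⟨j.val, j.isLt.trans s.isLt⟩) (Fin.snoc (α := fun _ => α) y x s))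
          = (∏ i : Fin n, κ i.castSucc (fun j => y ⟨j.val, j.isLt.trans i.isLt⟩) (y i))
            * κ (Fin.last n) (fun j => y ⟨j.val, j.isLt⟩) x := by
      intro x y
      rw [Fin.prod_univ_castSucc]
      congr 1
      · apply Finset.prod_congr rfl
        intro i _
        rw [Fin.snoc_castSucc]
        congr 1
        funext j
        exact snoc_lt _ _ _ (j.isLt.trans i.isLt)
      · rw [Fin.snoc_last]
        congr 1
        funext j
        exact snoc_lt _ _ _ j.isLt
    simp only [key]
    rw [Finset.sum_comm]
    by_cases hs : s₀.val < n
    · have hcast : Fin.castSucc (⟨s₀.val, hs⟩ : Fin n) = s₀ := Fin.ext rfl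
      have step : ∀ y : Fin n → α,
          ∑ x : α, (∏ i : Fin n, κ i.castSucc (fun j => y ⟨j.val, j.isLt.trans i.isLt⟩) (y i))
              * κ (Fin.last n) (fun j => y ⟨j.val, j.isLt⟩) x
              * h (Fin.snoc (α := fun _ => α) y x s₀)
            = (∏ i : Fin n, κ i.castSucc (fun j => y ⟨j.val, j.isLt.trans i.isLt⟩) (y i))
              * h (y ⟨s₀.val, hs⟩) := by
        intro y
        have : ∀ x : α, (∏ i : Fin n, κ i.castSucc (fun j => y ⟨j.val, j.isLt.trans i.isLt⟩) (y i))
              * κ (Fin.last n) (fun j => y ⟨j.val, j.isLt⟩) x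
              * h (Fin.snoc (α := fun _ => α) y x s₀)
            = (∏ i : Fin n, κ i.castSucc (fun j => y ⟨j.val, j.isLt.trans i.isLt⟩) (y i))
              * h (y ⟨s₀.val, hs⟩) * κ (Fin.last n) (fun j => y ⟨j.val, j.isLt⟩) x := by
          intro x
          rw [snoc_lt _ _ _ hs]
          ring
        rw [Finset.sum_congr rfl fun x _ => this x, ← Finset.mul_sum, hκ, mul_one]
      rw [Finset.sum_congr rfl fun y _ => step y]
      exact ih (fun i => κ i.castSucc) (fun i hist => hκ i.castSucc hist) ⟨s₀.val, hs⟩ h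
        (fun hist => hh hist)
    · have hlast : s₀ = Fin.last n := Fin.ext (by rw [Fin.val_last]; omega)
      subst hlast
      have step : ∀ y : Fin n → α,
          ∑ x : α, (∏ i : Fin n, κ i.castSucc (fun j => y ⟨j.val, j.isLt.trans i.isLt⟩) (y i))
              * κ (Fin.last n) (fun j => y ⟨j.val, j.isLt⟩) x
              * h (Fin.snoc (α := fun _ => α) y x (Fin.last n)) = 0 := by
        intro y
        have : ∀ x : α, (∏ i : Fin n, κ i.castSucc (fun j => y ⟨j.val, j.isLt.trans i.isLt⟩) (y i))
              * κ (Fin.last n) (fun j => y ⟨j.val, j.isLt⟩) x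
              * h (Fin.snoc (α := fun _ => α) y x (Fin.last n))
            = (∏ i : Fin n, κ i.castSucc (fun j => y ⟨j.val, j.isLt.trans i.isLt⟩) (y i))
              * (κ (Fin.last n) (fun j => y ⟨j.val, j.isLt⟩) x * h x) := by
          intro x
          rw [Fin.snoc_last]
          ring
        rw [Finset.sum_congr rfl fun x _ => this x, ← Finset.mul_sum,
          hh (fun j => y ⟨j.val, j.isLt⟩), mul_zero]
      rw [Finset.sum_congr rfl fun y _ => step y, Finset.sum_const, smul_zero]


/-- Bernoulli probability mass: `bern θ true = θ`, `bern θ false = 1 - θ`. -/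
def bern (θ : ℝ) (b : Bool) : ℝ := if b then θ else 1 - θ

/-- Binary (Bernoulli) KL divergence. -/
noncomputable def klBin (a b : ℝ) : ℝ :=
  a * Real.log (a / b) + (1 - a) * Real.log ((1 - a) / (1 - b))

/-- Chain rule for KL divergence in a bandit process: let `p` and `q` be the laws of a
trajectory `z = (a₁,r₁,…,a_t,r_t)` of (action, Bernoulli reward) pairs, generated by the
same (history-dependent, randomized) policy `pol`, with arm means `μ` under `p` and `ν`
under `q`, where `ν` agrees with `μ` except on arm `k` where `ν k = β`. Then
`KL(p‖q) = kl(μ k, β) · E_p[T_k(t)]`, where `T_k(t)` is the number of pulls of arm `k`. -/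
theorem kl_chain_rule_bandit (t K : ℕ) (k : Fin K) (μ ν : Fin K → ℝ) (β : ℝ)
    (hμ : ∀ a, 0 < μ a ∧ μ a < 1) (hβ0 : 0 < β) (hβ1 : β < 1)
    (hν : ∀ a, a ≠ k → ν a = μ a) (hνk : ν k = β)
    (pol : (s : Fin t) → (Fin s.val → Fin K × Bool) → Fin K → ℝ)
    (hpol0 : ∀ s h a, 0 ≤ pol s h a) (hpol1 : ∀ s h, ∑ a, pol s h a = 1)
    (p q : (Fin t → Fin K × Bool) → ℝ)
    (hp : ∀ z, p z = ∏ s : Fin t,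
      pol s (fun j => z ⟨j.val, j.isLt.trans s.isLt⟩) (z s).1 * bern (μ (z s).1) (z s).2)
    (hq : ∀ z, q z = ∏ s : Fin t,
      pol s (fun j => z ⟨j.val, j.isLt.trans s.isLt⟩) (z s).1 * bern (ν (z s).1) (z s).2) :
    ∑ z : Fin t → Fin K × Bool, p z * Real.log (p z / q z)
      = klBin (μ k) β *
        ∑ z : Fin t → Fin K × Bool,
          p z * ∑ s : Fin t, (if (z s).1 = k then (1 : ℝ) else 0) := by
  set f : Bool → ℝ := fun b => Real.log (bern (μ k) b / bern β b) with hf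
  set c : ℝ := klBin (μ k) β with hc
  have hν' : ∀ a, 0 < ν a ∧ ν a < 1 := by
    intro a
    by_cases ha : a = k
    · rw [ha, hνk]; exact ⟨hβ0, hβ1⟩
    · rw [hν a ha]; exact hμ a
  have hbpos : ∀ (θ : ℝ), 0 < θ → θ < 1 → ∀ b, 0 < bern θ b := by
    intro θ h0 h1 b; cases b <;> simp [bern] <;> linarith
  -- per-step expected value of f minus c vanishes
  have hfc : ∑ b : Bool, bern (μ k) b * (f b - c) = 0 := by
    rw [Fintype.sum_bool, hf, hc]
    simp only [bern, if_pos, if_neg, Bool.cond_true]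
    simp [klBin]
    ring
  have htow : ∀ s₀ : Fin t, ∑ z : Fin t → Fin K × Bool, p z *
      ((if (z s₀).1 = k then (1:ℝ) else 0) * (f (z s₀).2 - c)) = 0 := by
    intro s₀
    have hker : ∀ (s : Fin t) (hist : Fin s.val → Fin K × Bool),
        ∑ x : Fin K × Bool, pol s hist x.1 * bern (μ x.1) x.2 = 1 := by
      intro s hist
      rw [Fintype.sum_prod_type]
      have : ∀ a : Fin K, ∑ b : Bool, pol s hist a * bern (μ a) b = pol s hist a := by
        intro a; rw [Fintype.sum_bool]; simp [bern]; ring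
      simp only [this]; exact hpol1 s hist
    have hcond : ∀ hist : Fin s₀.val → Fin K × Bool,
        ∑ x : Fin K × Bool, (pol s₀ hist x.1 * bern (μ x.1) x.2) *
          ((if x.1 = k then (1:ℝ) else 0) * (f x.2 - c)) = 0 := by
      intro hist
      rw [Fintype.sum_prod_type]
      apply Finset.sum_eq_zero
      intro a _
      by_cases ha : a = k
      · subst ha
        simp only [eq_self_iff_true, if_true, one_mul]
        have : ∀ b : Bool, pol s₀ hist a * bern (μ a) b * (f b - c)
            = pol s₀ hist a * (bern (μ a) b * (f b - c)) := fun b => by ring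
        rw [Finset.sum_congr rfl fun b _ => this b, ← Finset.mul_sum, hfc, mul_zero]
      · simp [ha]
    have := tower t (fun s hist x => pol s hist x.1 * bern (μ x.1) x.2) hker s₀
      (fun x => (if x.1 = k then (1:ℝ) else 0) * (f x.2 - c)) hcond
    simpa only [← hp] using this
  have hstep1 : ∀ z, p z * Real.log (p z / q z)
      = p z * ∑ s : Fin t, ((if (z s).1 = k then (1:ℝ) else 0) * f (z s).2) := by
    intro z
    by_cases hz : p z = 0
    · rw [hz]; ring
    · have hfac : ∀ s : Fin t,
          pol s (fun j => z ⟨j.val, j.isLt.trans s.isLt⟩) (z s).1 * bern (μ (z s).1) (z s).2 ≠ 0 := by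
        rw [hp z] at hz
        exact fun s => Finset.prod_ne_zero_iff.mp hz s (Finset.mem_univ s)
      have hpolpos : ∀ s : Fin t,
          0 < pol s (fun j => z ⟨j.val, j.isLt.trans s.isLt⟩) (z s).1 := by
        intro s
        rcases (hpol0 s _ (z s).1).lt_or_eq with h | h
        · exact h
        · exact absurd (by rw [← h]; ring) (hfac s)
      have hqpos : 0 < q z := by
        rw [hq z]
        exact Finset.prod_pos fun s _ =>
          mul_pos (hpolpos s) (hbpos _ (hν' _).1 (hν' _).2 _)
      congr 1
      rw [Real.log_div hz (ne_of_gt hqpos), hp z, hq z,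
        Real.log_prod (fun s _ => hfac s),
        Real.log_prod (fun s _ =>
          ne_of_gt (mul_pos (hpolpos s) (hbpos _ (hν' _).1 (hν' _).2 _))),
        ← Finset.sum_sub_distrib]
      apply Finset.sum_congr rfl
      intro s _
      rw [Real.log_mul (ne_of_gt (hpolpos s)) (ne_of_gt (hbpos _ (hμ _).1 (hμ _).2 _)),
        Real.log_mul (ne_of_gt (hpolpos s)) (ne_of_gt (hbpos _ (hν' _).1 (hν' _).2 _))]
      by_cases hk : (z s).1 = k
      · rw [hk, if_pos rfl, one_mul, hνk]
        simp only [hf]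
        rw [Real.log_div (ne_of_gt (hbpos _ (hμ k).1 (hμ k).2 _)) (ne_of_gt (hbpos _ hβ0 hβ1 _))]
        ring
      · rw [if_neg hk, hν _ hk]; ring
  calc ∑ z : Fin t → Fin K × Bool, p z * Real.log (p z / q z)
      = ∑ z : Fin t → Fin K × Bool, ∑ s : Fin t,
          p z * ((if (z s).1 = k then (1:ℝ) else 0) * f (z s).2) := by
        refine Finset.sum_congr rfl fun z _ => ?_
        rw [hstep1 z, Finset.mul_sum]
    _ = ∑ s : Fin t, ∑ z : Fin t → Fin K × Bool,
          p z * ((if (z s).1 = k then (1:ℝ) else 0) * f (z s).2) := Finset.sum_comm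
    _ = ∑ s : Fin t, ∑ z : Fin t → Fin K × Bool,
          c * (p z * (if (z s).1 = k then (1:ℝ) else 0)) := by
        refine Finset.sum_congr rfl fun s _ => ?_
        have h0 := htow s
        have hsplit : ∀ z, p z * ((if (z s).1 = k then (1:ℝ) else 0) * f (z s).2)
            = p z * ((if (z s).1 = k then (1:ℝ) else 0) * (f (z s).2 - c))
              + c * (p z * (if (z s).1 = k then (1:ℝ) else 0)) := fun z => by ring
        rw [Finset.sum_congr rfl fun z _ => hsplit z, Finset.sum_add_distrib, h0, zero_add]
    _ = ∑ z : Fin t → Fin K × Bool, ∑ s : Fin t,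
          c * (p z * (if (z s).1 = k then (1:ℝ) else 0)) := Finset.sum_comm
    _ = c * ∑ z : Fin t → Fin K × Bool,
          p z * ∑ s : Fin t, (if (z s).1 = k then (1 : ℝ) else 0) := by
        rw [Finset.mul_sum]
        refine Finset.sum_congr rfl fun z _ => ?_
        rw [Finset.mul_sum, Finset.mul_sum]
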